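/- Let G be a countable group acting pointwise periodically by bounded linear operators on a Banach space X (i.e., every vector has finite orbit). If the action is such that the set of elements acting trivially is normal (which it always is), then the action is periodic: some finite-index subgroup of G fixes every vector. -/

import Mathlib

open MulAction

theorem stmt_18 {G X : Type*} [Group G] [Countable G]
    [NormedAddCommGroup X] [NormedSpace ℝ X] [CompleteSpace X]
    [MulAction G X]
    (hlin : ∀ g : G, IsBoundedLinearMap ℝ fun x : X => g • x)
    (hpp : ∀ x : X, (MulAction.orbit G x).Finite) :
    ∃ H : Subgroup G, H.FiniteIndex ∧ ∀ h ∈ H, ∀ x : X, h • x = x := by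
  classical
  -- the continuous linear map given by g
  set L : G → X →L[ℝ] X := fun g => (hlin g).toContinuousLinearMap with hL
  have hLapp : ∀ g (x : X), L g x = g • x := fun g x => rfl
  -- the fixed submodule of g
  set p : G → Submodule ℝ X := fun g =>
    LinearMap.ker (((L g - ContinuousLinearMap.id ℝ X) : X →L[ℝ] X) : X →ₗ[ℝ] X) with hp
  have hmem : ∀ g (x : X), x ∈ p g ↔ g • x = x := by
    intro g x
    simp [hp, LinearMap.mem_ker, sub_eq_zero, hLapp]
  -- elements not acting trivially
  set S : Set G := {g : G | ¬ ∀ y : X, g • y = y} with hS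
  -- for g ∈ S, the complement of the fixed set is open and dense
  have hopen : ∀ g : S, IsOpen ((p (g : G) : Set X)ᶜ) := by
    intro g
    have : IsClosed (p (g : G) : Set X) :=
      ContinuousLinearMap.isClosed_ker _
    exact this.isOpen_compl
  have hdense : ∀ g : S, Dense ((p (g : G) : Set X)ᶜ) := by
    intro g
    rw [← interior_eq_empty_iff_dense_compl]
    by_contra h
    have hne : (interior (p (g : G) : Set X)).Nonempty :=
      Set.nonempty_iff_ne_empty.2 h
    have := Submodule.eq_top_of_nonempty_interior' (p (g : G)) hne
    have hg := g.2
    apply hg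
    intro y
    have : y ∈ p (g : G) := by rw [this]; trivial
    exact (hmem _ y).1 this
  -- Baire: there is a point avoiding all these fixed sets
  have hD : Dense (⋂ g : S, ((p (g : G) : Set X)ᶜ)) :=
    dense_iInter_of_isOpen hopen hdense
  obtain ⟨x, hx⟩ := hD.nonempty
  refine ⟨MulAction.stabilizer G x, ?_, ?_⟩
  · have : Finite (MulAction.orbit G x) := (hpp x).to_subtype
    have : Finite (G ⧸ MulAction.stabilizer G x) :=
      Finite.of_equiv (MulAction.orbit G x) (MulAction.orbitEquivQuotientStabilizer G x)
    exact (MulAction.stabilizer G x).finiteIndex_of_finite_quotient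
  · intro h hh y
    by_contra hy
    have hhS : h ∈ S := fun hall => hy (hall y)
    have := Set.mem_iInter.1 hx ⟨h, hhS⟩
    exact this ((hmem h x).2 hh)
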